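/- Let a > b > 0 and P₁ = (x₁, y₁) on the ellipse x²/a² + y²/b² = 1 with x₁y₁ ≠ 0; let c² = a²−b². Define P₂ = (p₂ₓ/q₂, p₂ᵧ/q₂) with p₂ₓ = b⁴c²x₁³ − 2a⁴b²x₁²y₁ + a⁴c²x₁y₁² − 2a⁶y₁³, p₂ᵧ = 2b⁶x₁³ − b⁴c²x₁²y₁ + 2a²b⁴x₁y₁² − a⁴c²y₁³, q₂ = b⁴(a²+b²)x₁² − 2a²b²c²x₁y₁ + a⁴(a²+b²)y₁². Then P₂ lies on the ellipse x²/a² + y²/b² = 1. -/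

import Mathlib

theorem stmt_16 (a b c x₁ y₁ : ℝ) (hab : a > b) (hb : b > 0)
    (hc2 : c^2 = a^2 - b^2) (hxy : x₁ * y₁ ≠ 0)
    (hell : x₁^2 / a^2 + y₁^2 / b^2 = 1)
    (p₂ₓ p₂ᵧ q₂ : ℝ)
    (hpx : p₂ₓ = b^4*c^2*x₁^3 - 2*a^4*b^2*x₁^2*y₁ + a^4*c^2*x₁*y₁^2 - 2*a^6*y₁^3)
    (hpy : p₂ᵧ = 2*b^6*x₁^3 - b^4*c^2*x₁^2*y₁ + 2*a^2*b^4*x₁*y₁^2 - a^4*c^2*y₁^3)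
    (hq : q₂ = b^4*(a^2 + b^2)*x₁^2 - 2*a^2*b^2*c^2*x₁*y₁ + a^4*(a^2 + b^2)*y₁^2) :
    (p₂ₓ / q₂)^2 / a^2 + (p₂ᵧ / q₂)^2 / b^2 = 1 := by
  have ha : a > 0 := lt_trans hb hab
  have ha' : a ≠ 0 := ne_of_gt ha
  have hb' : b ≠ 0 := ne_of_gt hb
  have hx : x₁ ≠ 0 := fun h => hxy (by simp [h])
  have hy : y₁ ≠ 0 := fun h => hxy (by simp [h])
  rw [hc2] at hpx hpy hq
  have hE : b^2*x₁^2 + a^2*y₁^2 = a^2*b^2 := by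
    field_simp at hell; linarith
  have hq0 : q₂ > 0 := by
    have h1 : q₂ = (a^2-b^2)*(b^2*x₁-a^2*y₁)^2 + 2*b^6*x₁^2 + 2*a^4*b^2*y₁^2 := by
      rw [hq]; ring
    have h2 : a^2 - b^2 > 0 := by nlinarith
    have t1 : (a^2-b^2)*(b^2*x₁-a^2*y₁)^2 ≥ 0 := mul_nonneg h2.le (sq_nonneg _)
    have t2 : 2*b^6*x₁^2 > 0 := by positivity
    have t3 : 2*a^4*b^2*y₁^2 > 0 := by positivity
    linarith
  have hq' : q₂ ≠ 0 := ne_of_gt hq0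
  have key : p₂ₓ^2 * b^2 + p₂ᵧ^2 * a^2 = a^2 * b^2 * q₂^2 := by
    rw [hpx, hpy, hq]
    linear_combination (b^12*x₁^4 + 4*a^2*b^10*x₁^3*y₁ + 2*a^2*b^10*x₁^4
      + 6*a^4*b^8*x₁^2*y₁^2 + a^4*b^8*x₁^4 + 4*a^6*b^6*x₁*y₁^3
      - 4*a^6*b^6*x₁^2*y₁^2 - 4*a^6*b^6*x₁^3*y₁ + a^8*b^4*y₁^4
      + 6*a^8*b^4*x₁^2*y₁^2 + 2*a^10*b^2*y₁^4 - 4*a^10*b^2*x₁*y₁^3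
      + a^12*y₁^4) * hE
  have hne : a^2*b^2*q₂^2 ≠ 0 := by positivity
  have step : (p₂ₓ/q₂)^2/a^2 + (p₂ᵧ/q₂)^2/b^2 = (p₂ₓ^2*b^2 + p₂ᵧ^2*a^2)/(a^2*b^2*q₂^2) := by
    field_simp
  rw [step, key, div_self hne]
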